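/- Let $A$ be a Noetherian integral domain of characteristic $p>0$ with fraction field $K$, Frobenius split by $\phi: A \to A$, and let $B$ be the integral closure of $A$ in $K$. Extend $\phi$ to $\tilde\phi$ on $K$ by $\tilde\phi(a_1/a_2) := \phi(a_2^{p-1}a_1)/a_2$. Then $\tilde\phi(B) \subseteq B$; in particular, the Frobenius splitting of $A$ extends to a Frobenius splitting of its normalization $B$. -/

import Mathlib

/-- A Frobenius splitting of a Noetherian domain `A` extends to its integral closure
in the fraction field: the canonical extension `ψ` of `φ` to `Frac(A)` preserves the
integral closure `B`. -/
theorem stmt_3 {A : Type*} [CommRing A] [IsDomain A] [IsNoetherianRing A]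
    (p : ℕ) [Fact p.Prime] [CharP A p]
    (φ : A → A)
    (hadd : ∀ a b : A, φ (a + b) = φ a + φ b)
    (hsemi : ∀ a b : A, φ (a ^ p * b) = a * φ b)
    (hone : φ 1 = 1)
    (ψ : FractionRing A → FractionRing A)
    (hψ : ∀ a₁ a₂ : A, a₂ ≠ 0 →
      ψ (algebraMap A (FractionRing A) a₁ / algebraMap A (FractionRing A) a₂) =
        algebraMap A (FractionRing A) (φ (a₂ ^ (p - 1) * a₁)) /
          algebraMap A (FractionRing A) a₂) :
    ∀ x ∈ integralClosure A (FractionRing A), ψ x ∈ integralClosure A (FractionRing A) := by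
  classical
  intro x hx
  let K := FractionRing A
  let i : A →+* K := algebraMap A K
  have hinj : Function.Injective i := IsFractionRing.injective A K
  -- replace p by q + 1
  obtain ⟨q, rfl⟩ : ∃ q, p = q + 1 :=
    ⟨p - 1, (Nat.succ_pred_eq_of_pos (Fact.out : (p).Prime).pos).symm⟩
  simp only [Nat.add_sub_cancel] at hψ
  have hiz : ∀ a : A, a ≠ 0 → i a ≠ 0 := fun a ha => (map_ne_zero_iff i hinj).mpr ha
  -- ψ maps the image of A to itself
  have hψA : ∀ a : A, ψ (i a) = i (φ a) := by
    intro a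
    have h := hψ a 1 one_ne_zero
    simpa using h
  -- the key semilinearity on K
  have key : ∀ x y : K, ψ (x ^ (q + 1) * y) = x * ψ y := by
    intro x y
    obtain ⟨c, d, hd, rfl⟩ := IsFractionRing.div_surjective (A := A) x
    obtain ⟨e, f, hf, rfl⟩ := IsFractionRing.div_surjective (A := A) y
    have hd0 : d ≠ 0 := nonZeroDivisors.ne_zero hd
    have hf0 : f ≠ 0 := nonZeroDivisors.ne_zero hf
    have hdK : i d ≠ 0 := hiz d hd0
    have hfK : i f ≠ 0 := hiz f hf0
    have h1 : (i c / i d) ^ (q + 1) * (i e / i f)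
        = i (c ^ (q + 1) * e) / i (d ^ (q + 1) * f) := by
      rw [map_mul, map_mul, map_pow, map_pow, div_pow, div_mul_div_comm]
    rw [h1, hψ _ _ (mul_ne_zero (pow_ne_zero _ hd0) hf0)]
    have h2 : (d ^ (q + 1) * f) ^ q * (c ^ (q + 1) * e)
        = (d ^ q * c) ^ (q + 1) * (f ^ q * e) := by ring
    rw [h2, hsemi, hψ e f hf0]
    rw [map_mul, map_mul, map_mul, map_pow, map_pow]
    have hdK' : algebraMap A (FractionRing A) d ≠ 0 := hdK
    have hfK' : algebraMap A (FractionRing A) f ≠ 0 := hfK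
    simp only [K]
    field_simp
    ring
  -- the adjoin of x
  set T : Subalgebra A K := Algebra.adjoin A {x} with hT
  have hbint : IsIntegral A x := hx
  obtain ⟨s, hs⟩ := hbint.fg_adjoin_singleton
  -- common denominator a
  obtain ⟨a, ha⟩ := IsLocalization.exist_integer_multiples (nonZeroDivisors A) s id
  have ha0 : (a : A) ≠ 0 := nonZeroDivisors.ne_zero a.2
  have haK : i (a : A) ≠ 0 := hiz _ ha0
  -- the submodule of "integers"
  set N : Submodule A K := LinearMap.range (Algebra.linearMap A K) with hN
  have hmemN : ∀ z : K, z ∈ N ↔ ∃ t : A, i t = z := by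
    intro z
    constructor
    · rintro ⟨t, rfl⟩; exact ⟨t, rfl⟩
    · rintro ⟨t, rfl⟩; exact ⟨t, rfl⟩
  have hNmul : ∀ z w : K, z ∈ N → w ∈ N → z * w ∈ N := by
    rintro _ _ ⟨t, rfl⟩ ⟨u, rfl⟩
    exact ⟨t * u, by simp⟩
  have hNpow : ∀ (z : K) (n : ℕ), z ∈ N → z ^ n ∈ N := by
    rintro _ n ⟨t, rfl⟩
    exact ⟨t ^ n, by simp⟩
  have hNψ : ∀ z : K, z ∈ N → ψ z ∈ N := by
    rintro _ ⟨t, rfl⟩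
    exact ⟨φ t, (hψA t).symm⟩
  -- a clears denominators of all of T
  have hcond : ∀ y ∈ T, i (a : A) * y ∈ N := by
    intro y hy
    have hy' : y ∈ Submodule.span A (s : Set K) := by
      rw [hs]; exact hy
    have : ∀ y ∈ Submodule.span A (s : Set K), (a : A) • y ∈ N := by
      intro y hy
      refine Submodule.span_induction ?_ ?_ ?_ ?_ hy
      · intro z hz
        obtain ⟨t, ht⟩ := ha z hz
        exact ⟨t, ht⟩
      · exact ⟨0, by simp⟩
      · intro z w _ _ h1 h2
        rw [smul_add]; exact N.add_mem h1 h2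
      · intro c z _ h1
        rw [smul_comm]; exact N.smul_mem c h1
    have h := this y hy'
    rwa [Algebra.smul_def] at h
  -- main induction
  have main : ∀ n : ℕ, (∀ y ∈ T, i (a : A) * (ψ x) ^ n * y ∈ N) ∧
      i (a : A) * (ψ x) ^ n ∈ N := by
    intro n
    induction n with
    | zero =>
      refine ⟨fun y hy => by simpa using hcond y hy, ?_⟩
      exact ⟨(a : A), by simp; rfl⟩
    | succ n ih =>
      obtain ⟨ihT, ihN⟩ := ih
      set z : K := i (a : A) * (ψ x) ^ n with hz
      have step : ∀ y ∈ T, ψ x * z * y ∈ N := by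
        intro y hy
        have hxy : (z * y) ^ (q + 1) * x = z ^ q * (z * (y ^ (q + 1) * x)) := by ring
        have hmem : (z * y) ^ (q + 1) * x ∈ N := by
          rw [hxy]
          refine hNmul _ _ (hNpow _ q ihN) (ihT _ ?_)
          exact T.mul_mem (T.pow_mem hy (q + 1)) (Algebra.self_mem_adjoin_singleton A x)
        have hk := key (z * y) x
        have : ψ x * z * y = ψ ((z * y) ^ (q + 1) * x) := by rw [hk]; ring
        rw [this]
        exact hNψ _ hmem
      constructor
      · intro y hy
        have := step y hy
        have hzz : i (a : A) * (ψ x) ^ (n + 1) * y = ψ x * z * y := by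
          rw [hz]; ring
        rwa [hzz]
      · have := step 1 T.one_mem
        have hzz : i (a : A) * (ψ x) ^ (n + 1) = ψ x * z * 1 := by
          rw [hz]; ring
        rwa [hzz]
  -- powers of ψ x lie in the span of (i a)⁻¹
  set S : Submodule A K := Submodule.span A {(i (a : A))⁻¹} with hS
  have hpow : ∀ n : ℕ, (ψ x) ^ n ∈ S := by
    intro n
    obtain ⟨t, ht⟩ := (hmemN _).mp (main n).2
    have : (ψ x) ^ n = t • (i (a : A))⁻¹ := by
      rw [Algebra.smul_def, ht]
      field_simp
    rw [this]
    exact S.smul_mem t (Submodule.mem_span_singleton_self _)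
  -- the adjoin of ψ x is contained in S
  have hle : Subalgebra.toSubmodule (Algebra.adjoin A {ψ x}) ≤ S := by
    rw [Algebra.adjoin_eq_span]
    refine Submodule.span_le.mpr ?_
    intro z hz
    obtain ⟨n, rfl⟩ := Submonoid.mem_closure_singleton.mp hz
    exact hpow n
  -- S is a Noetherian module
  have hSfg : S.FG := ⟨{(i (a : A))⁻¹}, by simp [hS]⟩
  have hSnoeth : IsNoetherian A S := isNoetherian_of_fg_of_noetherian S hSfg
  -- hence the adjoin submodule is FG
  set M : Submodule A K := Subalgebra.toSubmodule (Algebra.adjoin A {ψ x}) with hM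
  have hMfg : M.FG := by
    have h1 : (M.comap S.subtype).FG := IsNoetherian.noetherian _
    have h2 : (M.comap S.subtype).map S.subtype = M := by
      rw [Submodule.map_comap_subtype]
      exact inf_of_le_right hle
    rw [← h2]
    exact Submodule.FG.map _ h1
  exact IsIntegral.of_mem_of_fg _ hMfg _ (Algebra.self_mem_adjoin_singleton A _)
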